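/- The derivation action of Φ annihilates Π: Φ.Π = 0. -/

import Mathlib

open scoped RealInnerProductSpace

noncomputable section

variable {V : Type*} [NormedAddCommGroup V] [InnerProductSpace ℝ V] [FiniteDimensional ℝ V]

/-- The orthogonal projection onto `D`, as a map `V → V`. -/
def projD (D : Submodule ℝ V) (X : V) : V := (D.orthogonalProjection X : V)

/-- The bilinear form `h(X,Y) = ⟪πX, πY⟫`. -/
def hForm (D : Submodule ℝ V) (X Y : V) : ℝ := ⟪projD D X, projD D Y⟫

/-- The 2-form `ω(X,Y) = h(JX, Y)`. -/
def omForm (J : V →ₗ[ℝ] V) (D : Submodule ℝ V) (X Y : V) : ℝ := hForm D (J X) Y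

/-- The standard Kähler curvature-type tensor `Π` of constant holomorphic sectional curvature. -/
def PiT (J : V →ₗ[ℝ] V) (U Vv W : V) : V :=
  (1/4 : ℝ) • (⟪Vv, W⟫ • U - ⟪U, W⟫ • Vv + ⟪J Vv, W⟫ • J U - ⟪J U, W⟫ • J Vv
    - (2 * ⟪J U, Vv⟫) • J W)

/-- The curvature-type tensor `Φ`. -/
def PhiT (J : V →ₗ[ℝ] V) (D : Submodule ℝ V) (U Vv W : V) : V :=
  (1/8 : ℝ) • (⟪Vv, W⟫ • projD D U - ⟪U, W⟫ • projD D Vv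
    + hForm D Vv W • U - hForm D U W • Vv
    + ⟪J Vv, W⟫ • projD D (J U) - ⟪J U, W⟫ • projD D (J Vv)
    + omForm J D Vv W • J U - omForm J D U W • J Vv
    - (2 * ⟪J U, Vv⟫) • projD D (J W) - (2 * omForm J D U Vv) • J W)

/-- The curvature-type tensor `Ψ(U,V)W = −ω(U,V)·J(πW)`. -/
def PsiT (J : V →ₗ[ℝ] V) (D : Submodule ℝ V) (U Vv W : V) : V :=
  -(omForm J D U Vv) • J (projD D W)

/-- The derivation action of an endomorphism `A` on a bilinear form `T`. -/
def der2 (A : V → V) (T : V → V → ℝ) (X Y : V) : ℝ := -T (A X) Y - T X (A Y)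

/-- The derivation action of an endomorphism `A` on a 4-multilinear form `T`. -/
def der4 (A : V → V) (T : V → V → V → V → ℝ) (X Y Z W : V) : ℝ :=
  -T (A X) Y Z W - T X (A Y) Z W - T X Y (A Z) W - T X Y Z (A W)

/-- The 4-form `S₀(X,Y,Z,W) = ⟪S(X,Y)Z, W⟫` associated with an endomorphism-valued 2-form. -/
def form4 (S : V → V → V → V) (X Y Z W : V) : ℝ := ⟪S X Y Z, W⟫

/-- The 6-multilinear form `(R.S)(U,V,X,Y,Z,W) = (R(U,V).S₀)(X,Y,Z,W)`. -/
def dotRS (R S : V → V → V → V) (U Vv X Y Z W : V) : ℝ :=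
  der4 (R U Vv) (form4 S) X Y Z W

lemma projD_sa (D : Submodule ℝ V) (X Y : V) : ⟪projD D X, Y⟫ = ⟪X, projD D Y⟫ :=
  Submodule.inner_starProjection_left_eq_right D X Y

lemma projD_idem (D : Submodule ℝ V) (X : V) : projD D (projD D X) = projD D X :=
  Submodule.starProjection_eq_self_iff.mpr (D.orthogonalProjection X).2

lemma hForm_eq (D : Submodule ℝ V) (X Y : V) : hForm D X Y = ⟪X, projD D Y⟫ := by
  rw [hForm, projD_sa, projD_idem]

lemma omForm_eq (J : V →ₗ[ℝ] V) (D : Submodule ℝ V) (X Y : V) :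
    omForm J D X Y = ⟪J X, projD D Y⟫ := by
  rw [omForm, hForm_eq]

lemma Jskew (J : V →ₗ[ℝ] V) (hJ2 : ∀ X : V, J (J X) = -X)
    (hJg : ∀ X Y : V, ⟪J X, J Y⟫ = ⟪X, Y⟫) (X Y : V) : ⟪J X, Y⟫ = -⟪X, J Y⟫ := by
  have h := hJg X (J Y)
  rw [hJ2, inner_neg_right] at h
  linarith

lemma Jskew' (J : V →ₗ[ℝ] V) (hJ2 : ∀ X : V, J (J X) = -X)
    (hJg : ∀ X Y : V, ⟪J X, J Y⟫ = ⟪X, Y⟫) (X Y : V) : ⟪X, J Y⟫ = -⟪J X, Y⟫ := by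
  rw [Jskew J hJ2 hJg]; ring

lemma projD_J (J : V →ₗ[ℝ] V) (D : Submodule ℝ V)
    (hJ2 : ∀ X : V, J (J X) = -X) (hJg : ∀ X Y : V, ⟪J X, J Y⟫ = ⟪X, Y⟫)
    (hJD : ∀ X ∈ D, J X ∈ D) (X : V) : projD D (J X) = J (projD D X) := by
  have h1 : projD D (J (projD D X)) = J (projD D X) :=
    Submodule.starProjection_eq_self_iff.mpr (hJD _ (D.orthogonalProjection X).2)
  have h2 : J (X - projD D X) ∈ Dᗮ := by
    rw [Submodule.mem_orthogonal]
    intro u hu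
    have h3 : ⟪J u, X - projD D X⟫ = 0 :=
      Submodule.inner_right_of_mem_orthogonal (hJD u hu)
        (Submodule.sub_starProjection_mem_orthogonal (K := D) X)
    rw [Jskew' J hJ2 hJg, h3, neg_zero]
  have h4 : projD D (J (X - projD D X)) = 0 := by
    have h0 : J (X - (D.orthogonalProjection X : V)) ∈ Dᗮ := h2
    have h00 := Submodule.orthogonalProjectionOnto_apply_of_mem_orthogonal h0
    simp only [projD]
    rw [h00, Submodule.coe_zero]
  have h5 : J X = J (projD D X) + J (X - projD D X) := by
    rw [← map_add, add_sub_cancel]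
  have h6 : projD D (J X) = projD D (J (projD D X)) + projD D (J (X - projD D X)) := by
    unfold projD
    rw [← Submodule.coe_add, ← map_add, ← map_add, add_sub_cancel]
  rw [h6, h1, h4, add_zero]

lemma projD_J_sa (J : V →ₗ[ℝ] V) (D : Submodule ℝ V)
    (hJ2 : ∀ X : V, J (J X) = -X) (hJg : ∀ X Y : V, ⟪J X, J Y⟫ = ⟪X, Y⟫)
    (hJD : ∀ X ∈ D, J X ∈ D) (X Y : V) :
    ⟪J (projD D X), Y⟫ = ⟪J X, projD D Y⟫ := by
  rw [← projD_J J D hJ2 hJg hJD, projD_sa]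

lemma phi_expand (J : V →ₗ[ℝ] V) (D : Submodule ℝ V)
    (hJ2 : ∀ X : V, J (J X) = -X) (hJg : ∀ X Y : V, ⟪J X, J Y⟫ = ⟪X, Y⟫)
    (hJD : ∀ X ∈ D, J X ∈ D) (U Vv X Y : V) :
    ⟪PhiT J D U Vv X, Y⟫ =
      (1/8 : ℝ) * ( ⟪Vv,X⟫ * ⟪U, projD D Y⟫ - ⟪U,X⟫ * ⟪Vv, projD D Y⟫
        + ⟪Vv, projD D X⟫ * ⟪U,Y⟫ - ⟪U, projD D X⟫ * ⟪Vv,Y⟫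
        + ⟪J Vv, X⟫ * ⟪J U, projD D Y⟫ - ⟪J U, X⟫ * ⟪J Vv, projD D Y⟫
        + ⟪J Vv, projD D X⟫ * ⟪J U, Y⟫ - ⟪J U, projD D X⟫ * ⟪J Vv, Y⟫
        - 2 * ⟪J U, Vv⟫ * ⟪J X, projD D Y⟫ - 2 * ⟪J U, projD D Vv⟫ * ⟪J X, Y⟫ ) := by
  simp only [PhiT, hForm_eq, omForm_eq, inner_add_left, inner_sub_left,
    real_inner_smul_left, projD_sa, projD_idem, projD_J J D hJ2 hJg hJD,
    projD_J_sa J D hJ2 hJg hJD]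

lemma JprojD_swap (J : V →ₗ[ℝ] V) (D : Submodule ℝ V)
    (hJ2 : ∀ X : V, J (J X) = -X) (hJg : ∀ X Y : V, ⟪J X, J Y⟫ = ⟪X, Y⟫)
    (hJD : ∀ X ∈ D, J X ∈ D) (X Y : V) :
    ⟪J Y, projD D X⟫ = -⟪J X, projD D Y⟫ := by
  rw [← projD_J_sa J D hJ2 hJg hJD Y X, real_inner_comm, Jskew' J hJ2 hJg]

lemma phi_skew (J : V →ₗ[ℝ] V) (D : Submodule ℝ V)
    (hJ2 : ∀ X : V, J (J X) = -X) (hJg : ∀ X Y : V, ⟪J X, J Y⟫ = ⟪X, Y⟫)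
    (hJD : ∀ X ∈ D, J X ∈ D) (U Vv X Y : V) :
    ⟪PhiT J D U Vv X, Y⟫ = -⟪X, PhiT J D U Vv Y⟫ := by
  conv_rhs => rw [real_inner_comm]
  rw [phi_expand J D hJ2 hJg hJD U Vv X Y,
    phi_expand J D hJ2 hJg hJD U Vv Y X,
    show ⟪J Y, X⟫ = -⟪J X, Y⟫ by rw [Jskew J hJ2 hJg, real_inner_comm],
    JprojD_swap J D hJ2 hJg hJD X Y]
  ring

lemma projD_neg (D : Submodule ℝ V) (X : V) : projD D (-X) = -projD D X := by
  simp [projD]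

lemma phi_J (J : V →ₗ[ℝ] V) (D : Submodule ℝ V)
    (hJ2 : ∀ X : V, J (J X) = -X) (hJg : ∀ X Y : V, ⟪J X, J Y⟫ = ⟪X, Y⟫)
    (hJD : ∀ X ∈ D, J X ∈ D) (U Vv X : V) :
    J (PhiT J D U Vv X) = PhiT J D U Vv (J X) := by
  simp only [PhiT, hForm_eq, omForm_eq, map_smul, map_add, map_sub, map_neg,
    projD_J J D hJ2 hJg hJD, hJ2, hJg, Jskew' J hJ2 hJg, inner_neg_left,
    inner_neg_right, neg_smul, smul_neg, neg_neg, projD_neg]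
  module

lemma piT_expand (J : V →ₗ[ℝ] V) (a b c d : V) :
    ⟪PiT J a b c, d⟫ = (1/4 : ℝ) * (⟪b,c⟫*⟪a,d⟫ - ⟪a,c⟫*⟪b,d⟫ + ⟪J b,c⟫*⟪J a,d⟫
      - ⟪J a,c⟫*⟪J b,d⟫ - 2*⟪J a,b⟫*⟪J c,d⟫) := by
  simp only [PiT, inner_add_left, inner_sub_left, real_inner_smul_left]


theorem stmt_5 {V : Type*} [NormedAddCommGroup V] [InnerProductSpace ℝ V]
    [FiniteDimensional ℝ V]
    (J : V →ₗ[ℝ] V) (hJ2 : ∀ X : V, J (J X) = -X)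
    (hJg : ∀ X Y : V, ⟪J X, J Y⟫ = ⟪X, Y⟫)
    (D : Submodule ℝ V) (hD2 : Module.finrank ℝ ↥D = 2)
    (hJD : ∀ X ∈ D, J X ∈ D) :
    ∀ U Vv X Y Z W : V,
      dotRS (PhiT J D) (PiT J) U Vv X Y Z W = 0 := by
  intro U Vv X Y Z W
  simp only [dotRS, der4, form4, piT_expand J, phi_J J D hJ2 hJg hJD,
    phi_skew J D hJ2 hJg hJD]
  ring
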